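/- arXiv:0812.2195 — 3 statements merged into one kernel-verified Lean document; each statement's English description precedes it below -/
import Mathlib

section
/- If conjunctive query Q1 is bag-contained in conjunctive query Q2 (i.e., Q1(D,B) is a sub-multiset of Q2(D,B) for every bag-valued database D), then for each relation symbol p, the number of subgoals of Q2 with predicate p is at least the number of subgoals of Q1 with predicate p. -/
/-- A relational schema: a type of relation symbols with arities. -/
structure Schema where
  Rel : Type
  ar : Rel → ℕ

/-- A relational atom over schema `S`; variables are natural numbers. -/
structure Atom (S : Schema) where
  rel : S.Rel
  args : Fin (S.ar rel) → ℕ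

/-- A conjunctive query: a head (list of variables) and a body (list of atoms). -/
structure CQ (S : Schema) where
  hd : List ℕ
  body : List (Atom S)

variable {S : Schema} {Dom : Type}

def Atom.rename (f : ℕ → ℕ) (a : Atom S) : Atom S := ⟨a.rel, f ∘ a.args⟩

def CQ.rename (f : ℕ → ℕ) (Q : CQ S) : CQ S := ⟨Q.hd.map f, Q.body.map (Atom.rename f)⟩

/-- The variables of a query. -/
def CQ.vars (Q : CQ S) : Set ℕ := {x | x ∈ Q.hd ∨ ∃ a ∈ Q.body, ∃ i, a.args i = x}

/-- A bag-valued database: a finite multiset of tuples for each relation symbol. -/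
abbrev DB (S : Schema) (Dom : Type) := (r : S.Rel) → Multiset (Fin (S.ar r) → Dom)

/-- A set-valued database: every relation is a set. -/
def IsSetDB (D : DB S Dom) : Prop := ∀ r, (D r).Nodup

/-- An assignment satisfies a list of atoms. -/
def Sat (D : DB S Dom) (body : List (Atom S)) (γ : ℕ → Dom) : Prop :=
  ∀ a ∈ body, (γ ∘ a.args) ∈ D a.rel

/-- Bag-semantics weight of an assignment: product of multiplicities of matched tuples. -/
noncomputable def weight (D : DB S Dom) (Q : CQ S) (γ : ℕ → Dom) : ℕ :=
  (Q.body.map fun (a : Atom S) =>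
    letI : DecidableEq (Fin (S.ar a.rel) → Dom) := Classical.decEq _
    (D a.rel).count (γ ∘ a.args)).prod

/-- Canonical assignments: everything outside the query's variables is a default value. -/
def Canon [Inhabited Dom] (Q : CQ S) (γ : ℕ → Dom) : Prop := ∀ x, x ∉ Q.vars → γ x = default

/-- Bag semantics: multiplicity of the tuple `t` in `Q(D, B)`. -/
noncomputable def bagMult [Inhabited Dom] (D : DB S Dom) (Q : CQ S) (t : List Dom) : ℕ :=
  ∑ᶠ γ ∈ {γ : ℕ → Dom | Canon Q γ ∧ Q.hd.map γ = t}, weight D Q γ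

/-- Bag-set semantics: multiplicity of `t` in `Q(D, BS)`: one per satisfying assignment. -/
noncomputable def bsMult [Inhabited Dom] (D : DB S Dom) (Q : CQ S) (t : List Dom) : ℕ :=
  Nat.card {γ : ℕ → Dom // Canon Q γ ∧ Sat D Q.body γ ∧ Q.hd.map γ = t}

/-- Set semantics: the set of tuples returned by `Q` on `D`. -/
def setAns (D : DB S Dom) (Q : CQ S) : Set (List Dom) :=
  {t | ∃ γ : ℕ → Dom, Sat D Q.body γ ∧ Q.hd.map γ = t}

/-- Query isomorphism: a bijective variable renaming preserving head and body (as multiset). -/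
def CQIso (Q1 Q2 : CQ S) : Prop :=
  ∃ e : ℕ ≃ ℕ, Q1.hd.map ⇑e = Q2.hd ∧
    Multiset.map (Atom.rename ⇑e) (Q1.body : Multiset (Atom S)) = (Q2.body : Multiset (Atom S))

section Aux
variable {S : Schema} {Dom : Type}

open Classical in
/-- The test database: `p` gets `n` copies of the constant-default tuple,
every other relation gets one copy. -/
noncomputable def testDB [DecidableEq S.Rel] [Inhabited Dom] (p : S.Rel) (n : ℕ) : DB S Dom :=
  fun r => Multiset.replicate (if r = p then n else 1) (fun _ => (default : Dom))

lemma weight_testDB [DecidableEq S.Rel] [Inhabited Dom] (p : S.Rel) (n : ℕ) (Q : CQ S) :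
    weight (testDB (Dom := Dom) p n) Q (fun _ => default)
      = n ^ (Q.body.countP (fun a => decide (a.rel = p))) := by
  classical
  unfold weight testDB
  induction Q.body with
  | nil => simp
  | cons a l ih =>
      simp only [List.map_cons, List.prod_cons, List.countP_cons, ih]
      have h1 : ((fun _ => (default : Dom)) ∘ a.args) = (fun _ => (default : Dom)) := rfl
      have h2 : @Multiset.count _ (Classical.decEq (Fin (S.ar a.rel) → Dom))
          (fun _ : Fin (S.ar a.rel) => (default : Dom))
          (Multiset.replicate (if a.rel = p then n else 1)
            (fun _ : Fin (S.ar a.rel) => (default : Dom)))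
          = (if a.rel = p then n else 1) :=
        @Multiset.count_replicate_self _ (Classical.decEq _) _ _
      rw [h1, h2]
      by_cases h : a.rel = p <;> simp [h, pow_succ, Nat.mul_comm]

lemma weight_testDB_eq_zero [DecidableEq S.Rel] [Inhabited Dom] (p : S.Rel) (n : ℕ)
    (Q : CQ S) (γ : ℕ → Dom) {a : Atom S} (ha : a ∈ Q.body) {i : Fin (S.ar a.rel)}
    (hi : γ (a.args i) ≠ default) :
    weight (testDB (Dom := Dom) p n) Q γ = 0 := by
  classical
  unfold weight
  apply List.prod_eq_zero
  refine List.mem_map.mpr ⟨a, ha, ?_⟩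
  have hne : (γ ∘ a.args) ≠ (fun _ => (default : Dom)) := by
    intro h; exact hi (congrFun h i)
  have hmem : (γ ∘ a.args) ∉ testDB (Dom := Dom) p n a.rel := by
    simp only [testDB, Multiset.mem_replicate]
    rintro ⟨-, h⟩; exact hne h
  exact (@Multiset.count_eq_zero _ (Classical.decEq _) _ _).mpr hmem

lemma bagMult_testDB [DecidableEq S.Rel] [Inhabited Dom] (p : S.Rel) {n : ℕ} (hn : 1 ≤ n)
    (Q : CQ S) :
    bagMult (testDB (Dom := Dom) p n) Q (List.replicate Q.hd.length default)
      = n ^ (Q.body.countP (fun a => decide (a.rel = p))) := by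
  classical
  set c : ℕ → Dom := fun _ => default with hc
  set f : (ℕ → Dom) → ℕ := weight (testDB (Dom := Dom) p n) Q with hf
  have hfc : f c = n ^ (Q.body.countP (fun a => decide (a.rel = p))) := weight_testDB p n Q
  have hfcpos : f c ≠ 0 := by rw [hfc]; positivity
  set s : Set (ℕ → Dom) := {γ | Canon Q γ ∧ Q.hd.map γ = List.replicate Q.hd.length default}
    with hs
  have hcs : c ∈ s := by
    constructor
    · intro x _; rfl
    · simp [c, List.map_const']
  have hsub : s ∩ Function.support f = ↑({c} : Finset (ℕ → Dom)) ∩ Function.support f := by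
    ext γ
    simp only [Set.mem_inter_iff, Function.mem_support, Finset.coe_singleton,
      Set.mem_singleton_iff]
    constructor
    · rintro ⟨⟨hcan, hhd⟩, hne⟩
      refine ⟨?_, hne⟩
      funext x
      by_cases hx : x ∈ Q.vars
      · rcases hx with hx | ⟨a, ha, i, hi⟩
        · -- x in head
          have : γ x ∈ Q.hd.map γ := List.mem_map.mpr ⟨x, hx, rfl⟩
          rw [hhd] at this
          exact List.eq_of_mem_replicate this
        · by_contra hne'
          exact hne (weight_testDB_eq_zero p n Q γ ha (hi ▸ hne'))
      · exact hcan x hx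
    · rintro ⟨rfl, hne⟩; exact ⟨hcs, hne⟩
  calc bagMult (testDB (Dom := Dom) p n) Q (List.replicate Q.hd.length default)
      = ∑ᶠ γ ∈ s, f γ := rfl
    _ = ∑ γ ∈ ({c} : Finset (ℕ → Dom)), f γ :=
        finsum_mem_eq_sum_of_inter_support_eq f hsub
    _ = f c := Finset.sum_singleton f c
    _ = _ := hfc

end Aux

/-- If Q1 is bag-contained in Q2 on all bag-valued databases, then for each
relation symbol p, Q2 has at least as many subgoals with predicate p as Q1 does. -/
theorem bag_containment_implies_subgoal_counts {S : Schema} [DecidableEq S.Rel]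
    (Dom : Type) [Inhabited Dom] [Infinite Dom] (Q1 Q2 : CQ S)
    (hcont : ∀ (D : DB S Dom) (t : List Dom), bagMult D Q1 t ≤ bagMult D Q2 t) :
    ∀ p : S.Rel,
      Q1.body.countP (fun a => decide (a.rel = p)) ≤
        Q2.body.countP (fun a => decide (a.rel = p)) := by
    classical
  intro p
  -- First: head lengths equal
  set t : List Dom := List.replicate Q1.hd.length default with ht
  have hlen : Q2.hd.length = Q1.hd.length := by
    by_contra hne
    have h1 := hcont (testDB p 1) t
    rw [bagMult_testDB p le_rfl Q1] at h1
    have h2 : bagMult (testDB (Dom := Dom) p 1) Q2 t = 0 := by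
      unfold bagMult
      rw [finsum_mem_eq_zero_of_forall_eq_zero]
      intro γ hγ
      exfalso
      apply hne
      have := hγ.2
      have := congrArg List.length this
      simpa [ht] using this
    rw [h2] at h1
    simp at h1
  have key := hcont (testDB p 2) t
  rw [bagMult_testDB p (by norm_num) Q1] at key
  have ht2 : t = List.replicate Q2.hd.length default := by rw [hlen]
  rw [ht2, bagMult_testDB p (by norm_num) Q2] at key
  exact (Nat.pow_le_pow_iff_right (by norm_num)).mp key
end

section
/- Two conjunctive queries Q and Q' are bag-set-equivalent if and only if their canonical representations (the queries obtained by deleting all duplicate atoms) are isomorphic. -/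
variable {S : Schema} {Dom : Type}

/-- The canonical representation of a body: duplicate atoms removed. -/
noncomputable def canonicalBody (Q : CQ S) : Multiset (Atom S) :=
  letI : DecidableEq (Atom S) := Classical.decEq _
  (Q.body : Multiset (Atom S)).dedup

-- ======================= auxiliary development =======================
open scoped Classical

lemma mem_canonicalBody {Q : CQ S} {a : Atom S} : a ∈ canonicalBody Q ↔ a ∈ Q.body := by
  classical
  simp [canonicalBody]

lemma nodup_canonicalBody (Q : CQ S) : (canonicalBody Q).Nodup := by
  classical
  exact Multiset.nodup_dedup _

lemma vars_finite (Q : CQ S) : Q.vars.Finite := by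
  have hsub : Q.vars ⊆ (↑Q.hd.toFinset : Set ℕ) ∪ ⋃ a ∈ Q.body, Set.range a.args := by
    rintro x (hx | ⟨a, ha, i, hi⟩)
    · exact Or.inl (by simpa using hx)
    · exact Or.inr (Set.mem_biUnion ha ⟨i, hi⟩)
  refine Set.Finite.subset ?_ hsub
  refine (List.finite_toSet _).union ?_
  exact Set.Finite.biUnion (List.finite_toSet _) (fun a _ => Set.finite_range _)

noncomputable def CQ.varsFinset (Q : CQ S) : Finset ℕ := (vars_finite Q).toFinset

@[simp] lemma coe_varsFinset (Q : CQ S) : (↑Q.varsFinset : Set ℕ) = Q.vars :=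
  (vars_finite Q).coe_toFinset

@[simp] lemma mem_varsFinset {Q : CQ S} {x : ℕ} : x ∈ Q.varsFinset ↔ x ∈ Q.vars :=
  (vars_finite Q).mem_toFinset

lemma mem_vars_of_hd {Q : CQ S} {x : ℕ} (h : x ∈ Q.hd) : x ∈ Q.vars := Or.inl h

lemma mem_vars_of_arg {Q : CQ S} {a : Atom S} (ha : a ∈ Q.body) (i : Fin (S.ar a.rel)) :
    a.args i ∈ Q.vars := Or.inr ⟨a, ha, i, rfl⟩

/-- Homomorphism of queries (normalized: 0 outside source vars). -/
def IsHom (Q R : CQ S) (h : ℕ → ℕ) : Prop :=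
  (∀ x, x ∉ Q.vars → h x = 0) ∧ (∀ a ∈ Q.body, Atom.rename h a ∈ R.body) ∧
    Q.hd.map h = R.hd

noncomputable def homCount (Q R : CQ S) : ℕ := Nat.card {h : ℕ → ℕ // IsHom Q R h}

def IsSurjHom (Q R : CQ S) (h : ℕ → ℕ) : Prop := IsHom Q R h ∧ h '' Q.vars = R.vars

noncomputable def surjCount (Q R : CQ S) : ℕ := Nat.card {h : ℕ → ℕ // IsSurjHom Q R h}

lemma IsHom.maps_vars {Q R : CQ S} {h : ℕ → ℕ} (hh : IsHom Q R h) :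
    ∀ x ∈ Q.vars, h x ∈ R.vars := by
  rintro x (hx | ⟨a, ha, i, hi⟩)
  · have : h x ∈ Q.hd.map h := List.mem_map_of_mem (f := h) hx
    rw [hh.2.2] at this
    exact mem_vars_of_hd this
  · subst hi
    exact mem_vars_of_arg (hh.2.1 a ha) i

/-- Hom sets are finite. -/
lemma finite_isHom (Q R : CQ S) : Finite {h : ℕ → ℕ // IsHom Q R h} := by
  classical
  let F : {h : ℕ → ℕ // IsHom Q R h} → (Q.varsFinset → R.varsFinset) :=
    fun h v => ⟨h.1 v.1, by
      have hv : (v.1 : ℕ) ∈ Q.vars := mem_varsFinset.mp v.2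
      exact mem_varsFinset.mpr (h.2.maps_vars v.1 hv)⟩
  have hF : Function.Injective F := by
    rintro ⟨h1, hh1⟩ ⟨h2, hh2⟩ heq
    ext x
    show h1 x = h2 x
    by_cases hx : x ∈ Q.vars
    · have := congrFun heq ⟨x, mem_varsFinset.mpr hx⟩
      simpa [F] using congrArg Subtype.val this
    · rw [hh1.1 x hx, hh2.1 x hx]
  exact Finite.of_injective F hF

lemma finite_isSurjHom (Q R : CQ S) : Finite {h : ℕ → ℕ // IsSurjHom Q R h} := by
  have := finite_isHom Q R
  exact Finite.of_injective (fun h => (⟨h.1, h.2.1⟩ : {h : ℕ → ℕ // IsHom Q R h}))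
    (by rintro ⟨h1, _⟩ ⟨h2, _⟩ heq; simpa using congrArg Subtype.val heq)

/-- Restriction of a query to a subset of variables (head kept, atoms filtered). -/
def CQ.restrict (R : CQ S) (W : Finset ℕ) : CQ S :=
  ⟨R.hd, R.body.filter (fun a => decide (∀ i, a.args i ∈ W))⟩

@[simp] lemma restrict_hd (R : CQ S) (W : Finset ℕ) : (R.restrict W).hd = R.hd := rfl

lemma mem_restrict_body {R : CQ S} {W : Finset ℕ} {a : Atom S} :
    a ∈ (R.restrict W).body ↔ a ∈ R.body ∧ ∀ i, a.args i ∈ W := by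
  simp [CQ.restrict, List.mem_filter]

lemma restrict_full (R : CQ S) : R.restrict R.varsFinset = R := by
  have : R.body.filter (fun a => decide (∀ i, a.args i ∈ R.varsFinset)) = R.body := by
    apply List.filter_eq_self.mpr
    intro a ha
    simp only [decide_eq_true_eq]
    intro i
    exact mem_varsFinset.mpr (mem_vars_of_arg ha i)
  cases R with
  | mk hd body => simpa [CQ.restrict] using this

/-- If a hom has image `W`, then the restriction of `R` to `W` has variable set exactly `W`. -/
lemma image_closed {Q R : CQ S} {h : ℕ → ℕ} {W : Finset ℕ}
    (hh : IsHom Q R h) (him : h '' Q.vars = ↑W) : (R.restrict W).vars = ↑W := by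
  apply Set.Subset.antisymm
  · rintro x (hx | ⟨a, ha, i, hi⟩)
    · -- head var of R
      rw [restrict_hd] at hx
      rw [← hh.2.2] at hx
      obtain ⟨v, hv, rfl⟩ := List.mem_map.mp hx
      rw [← him]
      exact ⟨v, mem_vars_of_hd hv, rfl⟩
    · subst hi
      exact (mem_restrict_body.mp ha).2 i
  · rintro x hx
    rw [← him] at hx
    obtain ⟨v, hv, rfl⟩ := hx
    rcases hv with hv | ⟨a, ha, i, hi⟩
    · apply mem_vars_of_hd
      rw [restrict_hd, ← hh.2.2]
      exact List.mem_map_of_mem (f := h) hv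
    · subst hi
      have hmem : Atom.rename h a ∈ (R.restrict W).body := by
        rw [mem_restrict_body]
        refine ⟨hh.2.1 a ha, fun j => ?_⟩
        have : h (a.args j) ∈ (↑W : Set ℕ) := him ▸ ⟨a.args j, mem_vars_of_arg ha j, rfl⟩
        exact this
      exact mem_vars_of_arg hmem i

lemma isHom_restrict_iff {Q R : CQ S} {W : Finset ℕ} (hcl : (R.restrict W).vars = ↑W)
    {h : ℕ → ℕ} : (IsHom Q R h ∧ h '' Q.vars = ↑W) ↔ IsSurjHom Q (R.restrict W) h := by
  constructor
  · rintro ⟨hh, him⟩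
    refine ⟨⟨hh.1, fun a ha => ?_, by rw [restrict_hd]; exact hh.2.2⟩, by rw [hcl]; exact him⟩
    rw [mem_restrict_body]
    refine ⟨hh.2.1 a ha, fun j => ?_⟩
    have : h (a.args j) ∈ (↑W : Set ℕ) := him ▸ ⟨a.args j, mem_vars_of_arg ha j, rfl⟩
    exact this
  · rintro ⟨hh, him⟩
    refine ⟨⟨hh.1, fun a ha => (mem_restrict_body.mp (hh.2.1 a ha)).1,
      by rw [← restrict_hd R W]; exact hh.2.2⟩, by rw [← hcl]; exact him⟩

lemma image_finset_eq_iff {Q : CQ S} {h : ℕ → ℕ} {W : Finset ℕ} :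
    Q.varsFinset.image h = W ↔ h '' Q.vars = ↑W := by
  constructor
  · intro hw
    rw [← coe_varsFinset, ← Finset.coe_image, hw]
  · intro hw
    apply Finset.coe_injective
    rw [Finset.coe_image, coe_varsFinset, hw]

/-- Key decomposition: hom count as a sum of surjective-hom counts onto restrictions. -/
lemma homCount_eq_sum (Q R : CQ S) :
    homCount Q R = ∑ W ∈ R.varsFinset.powerset,
      (if (R.restrict W).vars = (↑W : Set ℕ) then surjCount Q (R.restrict W) else 0) := by
  classical
  haveI := finite_isHom Q R
  haveI : Fintype {h : ℕ → ℕ // IsHom Q R h} := Fintype.ofFinite _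
  have hcard : homCount Q R = Fintype.card {h : ℕ → ℕ // IsHom Q R h} :=
    Nat.card_eq_fintype_card
  have hmap : ∀ h : {h : ℕ → ℕ // IsHom Q R h},
      Q.varsFinset.image h.1 ∈ R.varsFinset.powerset := by
    intro h
    rw [Finset.mem_powerset]
    intro x hx
    obtain ⟨v, hv, rfl⟩ := Finset.mem_image.mp hx
    exact mem_varsFinset.mpr (h.2.maps_vars v (mem_varsFinset.mp hv))
  have := Finset.card_eq_sum_card_fiberwise (f := fun h : {h : ℕ → ℕ // IsHom Q R h} =>
    Q.varsFinset.image h.1) (s := Finset.univ) (t := R.varsFinset.powerset)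
    (fun h _ => hmap h)
  have hc2 : Fintype.card {h : ℕ → ℕ // IsHom Q R h}
      = (Finset.univ : Finset {h : ℕ → ℕ // IsHom Q R h}).card := rfl
  rw [hcard, hc2, this]
  apply Finset.sum_congr rfl
  intro W _
  have hfib : (Finset.univ.filter (fun h : {h : ℕ → ℕ // IsHom Q R h} =>
      Q.varsFinset.image h.1 = W)).card
      = Nat.card {x : {h : ℕ → ℕ // IsHom Q R h} // Q.varsFinset.image x.1 = W} := by
    rw [← Fintype.card_subtype, Nat.card_eq_fintype_card]
  have hfib2 : Nat.card {x : {h : ℕ → ℕ // IsHom Q R h} // Q.varsFinset.image x.1 = W}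
      = Nat.card {h : ℕ → ℕ // IsHom Q R h ∧ h '' Q.vars = ↑W} := by
    apply Nat.card_congr
    exact {
      toFun := fun h => ⟨h.1.1, h.1.2, image_finset_eq_iff.mp h.2⟩
      invFun := fun h => ⟨⟨h.1, h.2.1⟩, image_finset_eq_iff.mpr h.2.2⟩
      left_inv := fun h => rfl
      right_inv := fun h => rfl }
  rw [hfib, hfib2]
  by_cases hcl : (R.restrict W).vars = (↑W : Set ℕ)
  · rw [if_pos hcl]
    unfold surjCount
    exact Nat.card_congr (Equiv.subtypeEquivRight (fun h => isHom_restrict_iff hcl))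
  · rw [if_neg hcl]
    have : IsEmpty {h : ℕ → ℕ // IsHom Q R h ∧ h '' Q.vars = ↑W} := by
      constructor
      rintro ⟨h, hh, him⟩
      exact hcl (image_closed hh him)
    exact Nat.card_of_isEmpty

lemma varsFinset_restrict {R : CQ S} {W : Finset ℕ} (hcl : (R.restrict W).vars = (↑W : Set ℕ)) :
    (R.restrict W).varsFinset = W := by
  apply Finset.coe_injective
  rw [coe_varsFinset, hcl]

lemma surjCount_eq_of_homCount_eq {Q1 Q2 : CQ S}
    (hyp : ∀ R : CQ S, homCount Q1 R = homCount Q2 R) :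
    ∀ R : CQ S, surjCount Q1 R = surjCount Q2 R := by
  suffices H : ∀ n : ℕ, ∀ R : CQ S, R.varsFinset.card = n →
      surjCount Q1 R = surjCount Q2 R by
    exact fun R => H _ R rfl
  intro n
  induction n using Nat.strong_induction_on with
  | _ n IH =>
  intro R hR
  have h1 := homCount_eq_sum Q1 R
  have h2 := homCount_eq_sum Q2 R
  have hfull : R.varsFinset ∈ R.varsFinset.powerset := Finset.mem_powerset_self _
  rw [← Finset.sum_erase_add _ _ hfull] at h1 h2
  have hterm : ∀ Q : CQ S,
      (if (R.restrict R.varsFinset).vars = (↑R.varsFinset : Set ℕ)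
        then surjCount Q (R.restrict R.varsFinset) else 0) = surjCount Q R := by
    intro Q
    rw [restrict_full, if_pos (coe_varsFinset R).symm]
  rw [hterm Q1] at h1
  rw [hterm Q2] at h2
  have hrest : ∑ W ∈ R.varsFinset.powerset.erase R.varsFinset,
      (if (R.restrict W).vars = (↑W : Set ℕ) then surjCount Q1 (R.restrict W) else 0)
      = ∑ W ∈ R.varsFinset.powerset.erase R.varsFinset,
      (if (R.restrict W).vars = (↑W : Set ℕ) then surjCount Q2 (R.restrict W) else 0) := by
    apply Finset.sum_congr rfl
    intro W hW
    obtain ⟨hne, hmem⟩ := Finset.mem_erase.mp hW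
    by_cases hcl : (R.restrict W).vars = (↑W : Set ℕ)
    · rw [if_pos hcl, if_pos hcl]
      have hss : W ⊂ R.varsFinset := Finset.ssubset_iff_subset_ne.mpr
        ⟨Finset.mem_powerset.mp hmem, hne⟩
      have hlt : W.card < n := hR ▸ Finset.card_lt_card hss
      exact IH W.card hlt (R.restrict W) (by rw [varsFinset_restrict hcl])
    · rw [if_neg hcl, if_neg hcl]
  have := hyp R
  rw [h1, h2, hrest] at this
  exact Nat.add_left_cancel this

lemma surjCount_self_pos (Q : CQ S) : 0 < surjCount Q Q := by
  classical
  haveI := finite_isSurjHom Q Q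
  have hne : Nonempty {h : ℕ → ℕ // IsSurjHom Q Q h} := by
    refine ⟨⟨fun x => if x ∈ Q.vars then x else 0, ⟨⟨fun x hx => if_neg hx, ?_, ?_⟩, ?_⟩⟩⟩
    · intro a ha
      have : (fun x => if x ∈ Q.vars then x else 0) ∘ a.args = a.args := by
        funext i
        exact if_pos (mem_vars_of_arg ha i)
      show Atom.mk a.rel _ ∈ Q.body
      rw [this]
      exact ha
    · have : ∀ x ∈ Q.hd, (fun x => if x ∈ Q.vars then x else 0) x = x := by
        intro x hx
        exact if_pos (mem_vars_of_hd hx)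
      rw [List.map_congr_left this]
      simp
    · ext y
      constructor
      · rintro ⟨x, hx, rfl⟩
        simpa [if_pos hx] using hx
      · intro hy
        exact ⟨y, hy, if_pos hy⟩
  exact Nat.card_pos

lemma rename_eq_on_vars {Q : CQ S} {e f : ℕ → ℕ} (hef : ∀ x ∈ Q.vars, e x = f x)
    {a : Atom S} (ha : a ∈ Q.body) : Atom.rename e a = Atom.rename f a := by
  unfold Atom.rename
  congr 1
  funext i
  exact hef (a.args i) (mem_vars_of_arg ha i)

lemma rename_injOn_of_injOn {Q : CQ S} {f : ℕ → ℕ} (hinj : Set.InjOn f Q.vars)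
    {a b : Atom S} (ha : a ∈ Q.body) (hb : b ∈ Q.body)
    (heq : Atom.rename f a = Atom.rename f b) : a = b := by
  obtain ⟨ra, va⟩ := a
  obtain ⟨rb, vb⟩ := b
  obtain ⟨hr, hargs⟩ := Atom.mk.injEq _ _ _ _ ▸ heq
  subst hr
  have hargs' : f ∘ va = f ∘ vb := eq_of_heq hargs
  congr 1
  funext i
  exact hinj (mem_vars_of_arg ha i) (mem_vars_of_arg hb i) (congrFun hargs' i)

lemma exists_iso_of_surj_homs {Q1 Q2 : CQ S} {f g : ℕ → ℕ}
    (hf : IsSurjHom Q1 Q2 f) (hg : IsSurjHom Q2 Q1 g) :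
    ∃ e : ℕ ≃ ℕ, Q1.hd.map ⇑e = Q2.hd ∧
      (canonicalBody Q1).map (Atom.rename ⇑e) = canonicalBody Q2 := by
  classical
  have hfin1 := vars_finite Q1
  have hfin2 := vars_finite Q2
  -- cardinalities of variable sets
  have hle1 : Q2.vars.ncard ≤ Q1.vars.ncard := by
    rw [← hf.2]; exact Set.ncard_image_le hfin1
  have hle2 : Q1.vars.ncard ≤ Q2.vars.ncard := by
    rw [← hg.2]; exact Set.ncard_image_le hfin2
  have hcards : Q1.vars.ncard = Q2.vars.ncard := le_antisymm hle2 hle1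
  have hinjf : Set.InjOn f Q1.vars :=
    Set.injOn_of_ncard_image_eq (by rw [hf.2, hcards]) hfin1
  have hinjg : Set.InjOn g Q2.vars :=
    Set.injOn_of_ncard_image_eq (by rw [hg.2, hcards]) hfin2
  -- atoms
  letI : DecidableEq (Atom S) := Classical.decEq _
  set A1 : Finset (Atom S) := Q1.body.toFinset with hA1
  set A2 : Finset (Atom S) := Q2.body.toFinset with hA2
  have hmapf : A1.image (Atom.rename f) ⊆ A2 := by
    intro x hx
    obtain ⟨a, ha, rfl⟩ := Finset.mem_image.mp hx
    rw [hA2, List.mem_toFinset]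
    exact hf.1.2.1 a (by rw [hA1, List.mem_toFinset] at ha; exact ha)
  have hinjAf : Set.InjOn (Atom.rename f) (↑A1 : Set (Atom S)) := by
    intro a ha b hb heq
    have ha' : a ∈ Q1.body := by rwa [hA1, Finset.mem_coe, List.mem_toFinset] at ha
    have hb' : b ∈ Q1.body := by rwa [hA1, Finset.mem_coe, List.mem_toFinset] at hb
    exact rename_injOn_of_injOn hinjf ha' hb' heq
  have hmapg : A2.image (Atom.rename g) ⊆ A1 := by
    intro x hx
    obtain ⟨a, ha, rfl⟩ := Finset.mem_image.mp hx
    rw [hA1, List.mem_toFinset]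
    exact hg.1.2.1 a (by rw [hA2, List.mem_toFinset] at ha; exact ha)
  have hinjAg : Set.InjOn (Atom.rename g) (↑A2 : Set (Atom S)) := by
    intro a ha b hb heq
    have ha' : a ∈ Q2.body := by rwa [hA2, Finset.mem_coe, List.mem_toFinset] at ha
    have hb' : b ∈ Q2.body := by rwa [hA2, Finset.mem_coe, List.mem_toFinset] at hb
    exact rename_injOn_of_injOn hinjg ha' hb' heq
  have hc1 : A1.card ≤ A2.card := by
    calc A1.card = (A1.image (Atom.rename f)).card := (Finset.card_image_of_injOn hinjAf).symm
    _ ≤ A2.card := Finset.card_le_card hmapf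
  have hc2 : A2.card ≤ A1.card := by
    calc A2.card = (A2.image (Atom.rename g)).card := (Finset.card_image_of_injOn hinjAg).symm
    _ ≤ A1.card := Finset.card_le_card hmapg
  have hAc : A1.card = A2.card := le_antisymm hc1 hc2
  have himgA : A1.image (Atom.rename f) = A2 :=
    Finset.eq_of_subset_of_card_le hmapf
      (by rw [Finset.card_image_of_injOn hinjAf, hAc])
  -- build the bijection e : ℕ ≃ ℕ extending f on the variables of Q1
  have hbij : Set.BijOn f Q1.vars Q2.vars :=
    ⟨fun x hx => hf.1.maps_vars x hx, hinjf, by rw [Set.SurjOn, hf.2]⟩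
  let e1 : ↥Q1.vars ≃ ↥Q2.vars := Set.BijOn.equiv f hbij
  haveI : Infinite ↥(Q1.varsᶜ) := (hfin1.infinite_compl).to_subtype
  haveI : Infinite ↥(Q2.varsᶜ) := (hfin2.infinite_compl).to_subtype
  obtain ⟨ec⟩ : Nonempty (↥(Q1.varsᶜ) ≃ ↥(Q2.varsᶜ)) := nonempty_equiv_of_countable
  let e : ℕ ≃ ℕ := (Equiv.Set.sumCompl Q1.vars).symm.trans
    ((Equiv.sumCongr e1 ec).trans (Equiv.Set.sumCompl Q2.vars))
  have he : ∀ x ∈ Q1.vars, e x = f x := by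
    intro x hx
    show (Equiv.Set.sumCompl Q2.vars) ((Equiv.sumCongr e1 ec)
      ((Equiv.Set.sumCompl Q1.vars).symm x)) = f x
    rw [Equiv.Set.sumCompl_symm_apply_of_mem hx]
    simp [e1, Set.BijOn.equiv]
  have hrename : Function.Injective (Atom.rename (S := S) (⇑e)) := by
    intro a b heq
    obtain ⟨ra, va⟩ := a
    obtain ⟨rb, vb⟩ := b
    obtain ⟨hr, hargs⟩ := Atom.mk.injEq _ _ _ _ ▸ heq
    subst hr
    have hargs' : ⇑e ∘ va = ⇑e ∘ vb := eq_of_heq hargs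
    congr 1
    funext i
    exact e.injective (congrFun hargs' i)
  refine ⟨e, ?_, ?_⟩
  · rw [List.map_congr_left (fun x hx => he x (mem_vars_of_hd hx))]
    exact hf.1.2.2
  · rw [Multiset.Nodup.ext ((nodup_canonicalBody Q1).map hrename) (nodup_canonicalBody Q2)]
    intro x
    simp only [Multiset.mem_map, mem_canonicalBody]
    constructor
    · rintro ⟨b, hb, rfl⟩
      rw [rename_eq_on_vars he hb]
      have : Atom.rename f b ∈ A2 :=
        hmapf (Finset.mem_image_of_mem _ (by rw [hA1, List.mem_toFinset]; exact hb))
      rwa [hA2, List.mem_toFinset] at this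
    · intro hx
      have hx' : x ∈ A1.image (Atom.rename f) := by
        rw [himgA, hA2, List.mem_toFinset]
        exact hx
      obtain ⟨b, hb, rfl⟩ := Finset.mem_image.mp hx'
      have hb' : b ∈ Q1.body := by rwa [hA1, List.mem_toFinset] at hb
      exact ⟨b, hb', rename_eq_on_vars he hb'⟩

section Freeze

set_option linter.unusedSectionVars false

variable [Inhabited Dom]

/-- The canonical (frozen) set-database of a query, using an embedding of variables. -/
noncomputable def freezeDB (ι : ℕ ↪ Dom) (R : CQ S) : DB S Dom :=
  fun r => (canonicalBody R).filterMap
    (fun b => if h : b.rel = r then some (h ▸ (fun i => ι (b.args i))) else none)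

lemma mem_freezeDB {ι : ℕ ↪ Dom} {R : CQ S} {r : S.Rel} {t : Fin (S.ar r) → Dom} :
    t ∈ freezeDB ι R r ↔ ∃ b ∈ R.body, ∃ h : b.rel = r, h ▸ (fun i => ι (b.args i)) = t := by
  unfold freezeDB
  rw [Multiset.mem_filterMap]
  constructor
  · rintro ⟨b, hb, hsome⟩
    by_cases h : b.rel = r
    · rw [dif_pos h] at hsome
      exact ⟨b, mem_canonicalBody.mp hb, h, Option.some_injective _ hsome⟩
    · rw [dif_neg h] at hsome
      exact absurd hsome (by simp)
  · rintro ⟨b, hb, h, ht⟩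
    exact ⟨b, mem_canonicalBody.mpr hb, by rw [dif_pos h, ht]⟩

lemma freezeDB_isSetDB (ι : ℕ ↪ Dom) (R : CQ S) : IsSetDB (freezeDB ι R) := by
  intro r
  apply Multiset.Nodup.filterMap
  · rintro ⟨r1, v1⟩ ⟨r2, v2⟩ t h1 h2
    by_cases e1 : r1 = r
    · by_cases e2 : r2 = r
      · subst e1
        subst e2
        rw [dif_pos rfl] at h1 h2
        simp only [Option.mem_def, Option.some_inj] at h1 h2
        have hv : (fun i => ι (v1 i)) = fun i => ι (v2 i) := h1.trans h2.symm
        have : v1 = v2 := funext (fun i => ι.injective (congrFun hv i))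
        rw [this]
      · rw [dif_neg e2] at h2
        exact absurd h2 (by simp)
    · rw [dif_neg e1] at h1
      exact absurd h1 (by simp)
  · exact nodup_canonicalBody R

lemma freeze_sat_intro {ι : ℕ ↪ Dom} {R : CQ S} {c : Atom S} (hc : c ∈ R.body) :
    (fun i => ι (c.args i)) ∈ freezeDB ι R c.rel :=
  mem_freezeDB.mpr ⟨c, hc, rfl, rfl⟩

lemma freeze_sat_elim {ι : ℕ ↪ Dom} {R : CQ S} {a : Atom S} {γ : ℕ → Dom}
    (hmem : (γ ∘ a.args) ∈ freezeDB ι R a.rel) :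
    ∃ vb : Fin (S.ar a.rel) → ℕ, (⟨a.rel, vb⟩ : Atom S) ∈ R.body ∧
      ∀ i, γ (a.args i) = ι (vb i) := by
  obtain ⟨b, hb, h, ht⟩ := mem_freezeDB.mp hmem
  obtain ⟨rb, vb⟩ := b
  have h' : rb = a.rel := h
  subst h'
  exact ⟨vb, hb, fun i => (congrFun ht i).symm⟩

lemma gamma_mem_range {ι : ℕ ↪ Dom} {Q R : CQ S} {γ : ℕ → Dom}
    (hsat : Sat (freezeDB ι R) Q.body γ) (hhd : Q.hd.map γ = R.hd.map ι) :
    ∀ x ∈ Q.vars, γ x ∈ Set.range ι := by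
  rintro x (hx | ⟨a, ha, i, rfl⟩)
  · have : γ x ∈ Q.hd.map γ := List.mem_map_of_mem (f := γ) hx
    rw [hhd] at this
    obtain ⟨n, _, hn⟩ := List.mem_map.mp this
    exact ⟨n, hn⟩
  · obtain ⟨vb, _, hvb⟩ := freeze_sat_elim (hsat a ha)
    exact ⟨vb i, (hvb i).symm⟩

lemma freeze_hom_isHom {ι : ℕ ↪ Dom} {Q R : CQ S} {γ : ℕ → Dom}
    (hsat : Sat (freezeDB ι R) Q.body γ) (hhd : Q.hd.map γ = R.hd.map ι) :
    IsHom Q R (fun x => if x ∈ Q.vars then Function.invFun ι (γ x) else 0) := by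
  classical
  have hrange := gamma_mem_range hsat hhd
  refine ⟨fun x hx => if_neg hx, ?_, ?_⟩
  · intro a ha
    obtain ⟨vb, hvb, heq⟩ := freeze_sat_elim (hsat a ha)
    have : Atom.rename (fun x => if x ∈ Q.vars then Function.invFun ι (γ x) else 0) a
        = ⟨a.rel, vb⟩ := by
      unfold Atom.rename
      congr 1
      funext i
      rw [Function.comp_apply, if_pos (mem_vars_of_arg ha i), heq i,
        Function.leftInverse_invFun ι.injective]
    rw [this]
    exact hvb
  · apply List.map_injective_iff.mpr ι.injective
    rw [List.map_map, ← hhd]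
    apply List.map_congr_left
    intro x hx
    show ι (if x ∈ Q.vars then Function.invFun ι (γ x) else 0) = γ x
    rw [if_pos (mem_vars_of_hd hx)]
    exact Function.invFun_eq (hrange x (mem_vars_of_hd hx))

lemma freeze_hom_inv {ι : ℕ ↪ Dom} {Q R : CQ S} {h : ℕ → ℕ} (hh : IsHom Q R h) :
    Canon Q (fun x => if x ∈ Q.vars then ι (h x) else default) ∧
      Sat (freezeDB ι R) Q.body (fun x => if x ∈ Q.vars then ι (h x) else default) ∧
      Q.hd.map (fun x => if x ∈ Q.vars then ι (h x) else default) = R.hd.map ι := by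
  classical
  obtain ⟨hnorm, hbody, hhd⟩ := hh
  refine ⟨fun x hx => if_neg hx, ?_, ?_⟩
  · intro a ha
    have harr : (fun x => if x ∈ Q.vars then ι (h x) else default) ∘ a.args
        = fun i => ι ((Atom.rename h a).args i) := by
      funext i
      show (if a.args i ∈ Q.vars then ι (h (a.args i)) else default) = ι (h (a.args i))
      rw [if_pos (mem_vars_of_arg ha i)]
    rw [harr]
    exact freeze_sat_intro (hbody a ha)
  · rw [← hhd, List.map_map]
    apply List.map_congr_left
    intro x hx
    show (if x ∈ Q.vars then ι (h x) else default) = ι (h x)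
    rw [if_pos (mem_vars_of_hd hx)]

lemma bsMult_freeze (ι : ℕ ↪ Dom) (Q R : CQ S) :
    bsMult (freezeDB ι R) Q (R.hd.map ι) = homCount Q R := by
  classical
  apply Nat.card_congr
  refine {
    toFun := fun γ => ⟨fun x => if x ∈ Q.vars then Function.invFun ι (γ.1 x) else 0,
      freeze_hom_isHom γ.2.2.1 γ.2.2.2⟩
    invFun := fun h => ⟨fun x => if x ∈ Q.vars then ι (h.1 x) else default,
      freeze_hom_inv h.2⟩
    left_inv := ?_
    right_inv := ?_ }
  · rintro ⟨γ, hcanon, hsat, hhd⟩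
    apply Subtype.ext
    funext x
    show (if x ∈ Q.vars then ι (if x ∈ Q.vars then Function.invFun ι (γ x) else 0)
      else default) = γ x
    by_cases hx : x ∈ Q.vars
    · rw [if_pos hx, if_pos hx]
      exact Function.invFun_eq (gamma_mem_range hsat hhd x hx)
    · rw [if_neg hx]
      exact (hcanon x hx).symm
  · rintro ⟨h, hh⟩
    apply Subtype.ext
    funext x
    show (if x ∈ Q.vars then Function.invFun ι (if x ∈ Q.vars then ι (h x) else default)
      else 0) = h x
    by_cases hx : x ∈ Q.vars
    · rw [if_pos hx, if_pos hx]
      exact Function.leftInverse_invFun ι.injective (h x)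
    · rw [if_neg hx]
      exact (hh.1 x hx).symm

end Freeze

lemma mem_body_iff_of_iso {Q1 Q2 : CQ S} {e : ℕ ≃ ℕ}
    (hbody : (canonicalBody Q1).map (Atom.rename ⇑e) = canonicalBody Q2) {a : Atom S} :
    a ∈ Q2.body ↔ ∃ b ∈ Q1.body, Atom.rename ⇑e b = a := by
  rw [← mem_canonicalBody, ← hbody, Multiset.mem_map]
  simp only [mem_canonicalBody]

lemma vars_eq_of_iso {Q1 Q2 : CQ S} {e : ℕ ≃ ℕ} (hhd : Q1.hd.map ⇑e = Q2.hd)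
    (hbody : (canonicalBody Q1).map (Atom.rename ⇑e) = canonicalBody Q2) :
    Q2.vars = ⇑e '' Q1.vars := by
  ext x
  constructor
  · rintro (hx | ⟨a, ha, i, rfl⟩)
    · rw [← hhd] at hx
      obtain ⟨v, hv, rfl⟩ := List.mem_map.mp hx
      exact ⟨v, mem_vars_of_hd hv, rfl⟩
    · obtain ⟨b, hb, rfl⟩ := (mem_body_iff_of_iso hbody).mp ha
      exact ⟨b.args i, mem_vars_of_arg hb i, rfl⟩
  · rintro ⟨v, hv, rfl⟩
    rcases hv with hv | ⟨b, hb, i, rfl⟩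
    · apply mem_vars_of_hd
      rw [← hhd]
      exact List.mem_map_of_mem hv
    · have hmem : Atom.rename ⇑e b ∈ Q2.body :=
        (mem_body_iff_of_iso hbody).mpr ⟨b, hb, rfl⟩
      exact mem_vars_of_arg hmem i

lemma bsMult_eq_of_iso [Inhabited Dom] {Q1 Q2 : CQ S} (e : ℕ ≃ ℕ)
    (hhd : Q1.hd.map ⇑e = Q2.hd)
    (hbody : (canonicalBody Q1).map (Atom.rename ⇑e) = canonicalBody Q2)
    (D : DB S Dom) (t : List Dom) : bsMult D Q1 t = bsMult D Q2 t := by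
  have hvars := vars_eq_of_iso hhd hbody
  apply Nat.card_congr
  refine {
    toFun := fun γ => ⟨γ.1 ∘ ⇑e.symm, ?_, ?_, ?_⟩
    invFun := fun δ => ⟨δ.1 ∘ ⇑e, ?_, ?_, ?_⟩
    left_inv := ?_
    right_inv := ?_ }
  · -- Canon Q2
    intro x hx
    apply γ.2.1
    intro hmem
    apply hx
    rw [hvars]
    exact ⟨e.symm x, hmem, e.apply_symm_apply x⟩
  · -- Sat Q2
    intro a ha
    obtain ⟨b, hb, rfl⟩ := (mem_body_iff_of_iso hbody).mp ha
    have harr : (γ.1 ∘ ⇑e.symm) ∘ (Atom.rename ⇑e b).args = γ.1 ∘ b.args := by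
      funext i
      exact congrArg γ.1 (e.symm_apply_apply _)
    show ((γ.1 ∘ ⇑e.symm) ∘ (Atom.rename ⇑e b).args) ∈ D (Atom.rename ⇑e b).rel
    rw [harr]
    exact γ.2.2.1 b hb
  · -- head Q2
    have hcomp : (γ.1 ∘ ⇑e.symm) ∘ ⇑e = γ.1 := by
      funext x
      exact congrArg γ.1 (e.symm_apply_apply x)
    rw [← hhd, List.map_map, hcomp]
    exact γ.2.2.2
  · -- Canon Q1
    intro x hx
    apply δ.2.1
    rw [hvars]
    intro ⟨v, hv, hev⟩
    exact hx (e.injective hev ▸ hv)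
  · -- Sat Q1
    intro b hb
    have hmem : Atom.rename ⇑e b ∈ Q2.body := (mem_body_iff_of_iso hbody).mpr ⟨b, hb, rfl⟩
    exact δ.2.2.1 _ hmem
  · -- head Q1
    rw [← List.map_map, hhd]
    exact δ.2.2.2
  · rintro ⟨γ, _⟩
    apply Subtype.ext
    funext x
    exact congrArg γ (e.symm_apply_apply x)
  · rintro ⟨δ, _⟩
    apply Subtype.ext
    funext x
    exact congrArg δ (e.apply_symm_apply x)

/-- Two conjunctive queries are bag-set-equivalent iff their canonical
representations (duplicate atoms deleted) are isomorphic. -/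
theorem bag_set_equiv_iff_canonical_isomorphic {S : Schema}
    (Dom : Type) [Inhabited Dom] [Infinite Dom] (Q1 Q2 : CQ S) :
    (∀ D : DB S Dom, IsSetDB D → ∀ t : List Dom, bsMult D Q1 t = bsMult D Q2 t) ↔
      (∃ e : ℕ ≃ ℕ, Q1.hd.map ⇑e = Q2.hd ∧
        (canonicalBody Q1).map (Atom.rename ⇑e) = canonicalBody Q2) := by
  constructor
  · intro hyp
    let ι : ℕ ↪ Dom := Infinite.natEmbedding Dom
    have hhom : ∀ R : CQ S, homCount Q1 R = homCount Q2 R := by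
      intro R
      rw [← bsMult_freeze ι Q1 R, ← bsMult_freeze ι Q2 R]
      exact hyp (freezeDB ι R) (freezeDB_isSetDB ι R) _
    have hsurj := surjCount_eq_of_homCount_eq hhom
    have hf : 0 < surjCount Q1 Q2 := by rw [hsurj Q2]; exact surjCount_self_pos Q2
    have hg : 0 < surjCount Q2 Q1 := by rw [← hsurj Q1]; exact surjCount_self_pos Q1
    obtain ⟨f⟩ := (Nat.card_pos_iff.mp hf).1
    obtain ⟨g⟩ := (Nat.card_pos_iff.mp hg).1
    exact exists_iso_of_surj_homs f.2 g.2
  · rintro ⟨e, hhd, hbody⟩ D _ t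
    exact bsMult_eq_of_iso e hhd hbody D t
end

section
/- Let Σ contain the egd σ1: p(X,Y) ∧ p(X,Z) → Y = Z and the tgd σ2: r(X,Y) → p(X,Y). Consider Q(A) :- r(A,B) and Q'(A) :- r(A,B), p(A,B) obtained by the chase step applying σ2 to Q. If relation P may be a bag, then the step is unsound under bag semantics: the bag-valued database D with R = {{(a,b)}} and P = {{(a,b),(a,b)}} satisfies Σ and gives Q(D,B) = {{(a)}} but Q'(D,B) = {{(a),(a)}}. -/
variable {S : Schema} {Dom : Type}

/-- A tuple-generating dependency (tgd) `φ → ∃ Z̄ ψ`: left-hand side atoms, right-hand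
side atoms, and a finite set of existentially quantified variables. -/
structure TGD (S : Schema) where
  lhs : List (Atom S)
  rhs : List (Atom S)
  exVars : Finset ℕ

/-- An equality-generating dependency (egd) `φ → eq1 = eq2`. -/
structure EGD (S : Schema) where
  lhs : List (Atom S)
  eq1 : ℕ
  eq2 : ℕ

/-- An embedded dependency: a tgd or an egd. -/
inductive Dep (S : Schema) where
  | tgd : TGD S → Dep S
  | egd : EGD S → Dep S

/-- Well-formedness of a tgd: existential variables do not occur on the left-hand side,
and every non-existential variable of the right-hand side occurs on the left-hand side. -/
def TGD.wf (σ : TGD S) : Prop :=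
  (∀ a ∈ σ.lhs, ∀ i, a.args i ∉ σ.exVars) ∧
  (∀ a ∈ σ.rhs, ∀ i, a.args i ∉ σ.exVars → ∃ b ∈ σ.lhs, ∃ j, b.args j = a.args i)

/-- A database satisfies a tgd. -/
def TGDSat (D : DB S Dom) (σ : TGD S) : Prop :=
  ∀ γ : ℕ → Dom, (∀ a ∈ σ.lhs, (γ ∘ a.args) ∈ D a.rel) →
    ∃ γ' : ℕ → Dom, (∀ x, x ∉ σ.exVars → γ' x = γ x) ∧
      ∀ a ∈ σ.rhs, (γ' ∘ a.args) ∈ D a.rel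

/-- A database satisfies an egd. -/
def EGDSat (D : DB S Dom) (e : EGD S) : Prop :=
  ∀ γ : ℕ → Dom, (∀ a ∈ e.lhs, (γ ∘ a.args) ∈ D a.rel) → γ e.eq1 = γ e.eq2

/-- A database satisfies an embedded dependency. -/
def DSat (D : DB S Dom) : Dep S → Prop
  | .tgd σ => TGDSat D σ
  | .egd e => EGDSat D e

/-- A database satisfies a (finite) set of embedded dependencies. -/
def DBSat (D : DB S Dom) (Δ : List (Dep S)) : Prop := ∀ d ∈ Δ, DSat D d

/-- Chase with tgd `σ` is applicable to `Q` via `h`: `h` maps the left-hand side into the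
body of `Q` and cannot be extended to a homomorphism of the whole dependency. -/
def TgdApplicable (σ : TGD S) (Q : CQ S) (h : ℕ → ℕ) : Prop :=
  (∀ a ∈ σ.lhs, a.rename h ∈ Q.body) ∧
  ¬ ∃ h' : ℕ → ℕ, (∀ x, x ∉ σ.exVars → h' x = h x) ∧ ∀ a ∈ σ.rhs, a.rename h' ∈ Q.body

/-- `h'` extends `h` by mapping the existential variables injectively to fresh variables. -/
def FreshExt (σ : TGD S) (Q : CQ S) (h h' : ℕ → ℕ) : Prop :=
  (∀ x, x ∉ σ.exVars → h' x = h x) ∧ Set.InjOn h' ↑σ.exVars ∧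
  ∀ z ∈ σ.exVars, h' z ∉ Q.vars

/-- The result of a tgd chase step: conjoin the instantiated right-hand side. -/
def TgdResult (σ : TGD S) (Q : CQ S) (h' : ℕ → ℕ) : CQ S :=
  ⟨Q.hd, Q.body ++ σ.rhs.map (Atom.rename h')⟩

/-- A chase step with a tgd. -/
def TgdStep (σ : TGD S) (Q Q' : CQ S) : Prop :=
  ∃ h h' : ℕ → ℕ, TgdApplicable σ Q h ∧ FreshExt σ Q h h' ∧ Q' = TgdResult σ Q h'

/-- A chase step with an egd: identify the two variables it equates. -/
def EgdStep (e : EGD S) (Q Q' : CQ S) : Prop :=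
  ∃ h : ℕ → ℕ, (∀ a ∈ e.lhs, a.rename h ∈ Q.body) ∧ h e.eq1 ≠ h e.eq2 ∧
    (Q' = Q.rename (fun x => if x = h e.eq1 then h e.eq2 else x) ∨
     Q' = Q.rename (fun x => if x = h e.eq2 then h e.eq1 else x))

/-- A chase step with an embedded dependency. -/
def DepStep : Dep S → CQ S → CQ S → Prop
  | .tgd σ => TgdStep σ
  | .egd e => EgdStep e

/-- A (set-semantics) chase step using some dependency from `Δ`. -/
def SetChaseStep (Δ : List (Dep S)) (Q Q' : CQ S) : Prop := ∃ d ∈ Δ, DepStep d Q Q'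

/-- A query is a terminal result of set-semantics chase: no chase step applies. -/
def SetTerminal (Δ : List (Dep S)) (Q : CQ S) : Prop := ¬ ∃ Q', SetChaseStep Δ Q Q'

/-- An atom uses variable `v`. -/
def Atom.uses (a : Atom S) (v : ℕ) : Prop := ∃ i, a.args i = v

/-- Variable `v` occurs in the body of `Q`. -/
def Occurs (v : ℕ) (Q : CQ S) : Prop := ∃ a ∈ Q.body, a.uses v

/-- All variables of a tgd. -/
def TGD.varSet (σ : TGD S) : Set ℕ :=
  {x | (∃ a ∈ σ.lhs, a.uses x) ∨ (∃ a ∈ σ.rhs, a.uses x) ∨ x ∈ σ.exVars}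

/-- A regularized tgd: its right-hand side admits no nonshared partition into two nonempty
parts (i.e., parts sharing no existential variable). -/
def Regularized (σ : TGD S) : Prop :=
  ¬ ∃ l1 l2 : List (Atom S), l1 ≠ [] ∧ l2 ≠ [] ∧
      ((l1 ++ l2 : List (Atom S)) : Multiset (Atom S)) = (σ.rhs : Multiset (Atom S)) ∧
      ∀ v ∈ σ.exVars, ¬ ((∃ a ∈ l1, a.uses v) ∧ (∃ a ∈ l2, a.uses v))

/-- A pair of fresh extensions of `h` with pairwise distinct fresh images (two disjoint
copies of fresh existential variables). -/
def FreshPair (σ : TGD S) (Q : CQ S) (h h1 h2 : ℕ → ℕ) : Prop :=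
  FreshExt σ Q h h1 ∧ FreshExt σ Q h h2 ∧
  ∀ z ∈ σ.exVars, ∀ z' ∈ σ.exVars, h1 z ≠ h2 z'

/-- The associated test query `Q^{σ,h,θ}`: the body of `Q` conjoined with two copies of the
right-hand side of `σ`, instantiated with two disjoint families of fresh variables. -/
def testQuery (σ : TGD S) (Q : CQ S) (h1 h2 : ℕ → ℕ) : CQ S :=
  ⟨Q.hd, Q.body ++ σ.rhs.map (Atom.rename h1) ++ σ.rhs.map (Atom.rename h2)⟩

/-- `σ` is assignment-fixing w.r.t. `Q` and `h`: in every terminal set-chase result of the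
associated test query, at most one of the two fresh copies of each existential variable
still occurs. -/
def AssignmentFixing (Δ : List (Dep S)) (σ : TGD S) (Q : CQ S) (h : ℕ → ℕ) : Prop :=
  ∀ h1 h2 : ℕ → ℕ, FreshPair σ Q h h1 h2 →
    ∀ R : CQ S, Relation.ReflTransGen (SetChaseStep Δ) (testQuery σ Q h1 h2) R →
      SetTerminal Δ R → ∀ z ∈ σ.exVars, ¬ (Occurs (h1 z) R ∧ Occurs (h2 z) R)

/-- Relation symbols r and p (both binary). -/
inductive RelRP where
  | r | p

def Srp : Schema := ⟨RelRP, fun _ => 2⟩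

/-- σ1 : p(X,Y) ∧ p(X,Z) → Y = Z   (X = 0, Y = 1, Z = 2). -/
def egd1 : EGD Srp := ⟨[⟨RelRP.p, ![0, 1]⟩, ⟨RelRP.p, ![0, 2]⟩], 1, 2⟩

/-- σ2 : r(X,Y) → p(X,Y)   (X = 0, Y = 1; no existential variables). -/
def tgd2' : TGD Srp := ⟨[⟨RelRP.r, ![0, 1]⟩], [⟨RelRP.p, ![0, 1]⟩], ∅⟩

def Sigma15 : List (Dep Srp) := [Dep.egd egd1, Dep.tgd tgd2']

/-- The bag-valued database D with R = {{(a,b)}} and P = {{(a,b),(a,b)}},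
encoding a = 0, b = 1. -/
def D15 : DB Srp ℕ := fun x =>
  match x with
  | .r => {![0, 1]}
  | .p => {![0, 1], ![0, 1]}

/-- Q(A) :- r(A,B)   (A = 0, B = 1). -/
def Q15 : CQ Srp := ⟨[0], [⟨RelRP.r, ![0, 1]⟩]⟩

/-- Q'(A) :- r(A,B), p(A,B). -/
def Q15' : CQ Srp := ⟨[0], [⟨RelRP.r, ![0, 1]⟩, ⟨RelRP.p, ![0, 1]⟩]⟩


/-- The canonical assignment: 1 at variable 1, 0 elsewhere. -/
def gam0 : ℕ → ℕ := fun x => if x = 1 then 1 else 0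

lemma count_single_any {α : Type} (inst : DecidableEq α) (a b : α) :
    @Multiset.count α inst a {b} = if a = b then 1 else 0 := by
  letI := inst
  exact Multiset.count_singleton a b

lemma count_pair_any {α : Type} (inst : DecidableEq α) (a b : α) :
    @Multiset.count α inst a {b, b} = if a = b then 2 else 0 := by
  letI := inst
  rw [show ({b, b} : Multiset α) = b ::ₘ {b} from rfl, Multiset.count_cons,
    Multiset.count_singleton]
  split <;> simp_all

lemma tup_eq (γ : ℕ → ℕ) (h : (γ ∘ (![0, 1] : Fin 2 → ℕ)) = ![0, 1]) :
    γ 0 = 0 ∧ γ 1 = 1 := by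
  constructor
  · have := congrFun h 0; simpa using this
  · have := congrFun h 1; simpa using this

lemma tup2_eq (γ : ℕ → ℕ) (h : (γ ∘ (![0, 2] : Fin 2 → ℕ)) = ![0, 1]) :
    γ 0 = 0 ∧ γ 2 = 1 := by
  constructor
  · have := congrFun h 0; simpa using this
  · have := congrFun h 1; simpa using this

lemma mem_p {f : Fin 2 → ℕ} (h : f ∈ D15 RelRP.p) : f = ![0, 1] := by
  have h' : f ∈ ({![0, 1], ![0, 1]} : Multiset (Fin 2 → ℕ)) := h
  simpa using h'

lemma mem_r {f : Fin 2 → ℕ} (h : f ∈ D15 RelRP.r) : f = ![0, 1] := by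
  have h' : f ∈ ({![0, 1]} : Multiset (Fin 2 → ℕ)) := h
  simpa using h'

lemma dbsat15 : DBSat D15 Sigma15 := by
  intro d hd
  simp only [Sigma15, List.mem_cons, List.not_mem_nil, or_false] at hd
  rcases hd with rfl | rfl
  · -- egd
    intro γ hγ
    have h1 := hγ ⟨RelRP.p, ![0, 1]⟩ (by simp [egd1])
    have h2 := hγ ⟨RelRP.p, ![0, 2]⟩ (by simp [egd1])
    have e1 := (tup_eq γ (mem_p h1)).2
    have e2 := (tup2_eq γ (mem_p h2)).2
    show γ (1 : ℕ) = γ (2 : ℕ)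
    rw [e1, e2]
  · -- tgd
    intro γ hγ
    have h1 := hγ ⟨RelRP.r, ![0, 1]⟩ (by simp [tgd2'])
    refine ⟨γ, fun x _ => rfl, ?_⟩
    intro a ha
    simp only [tgd2', List.mem_cons, List.not_mem_nil, or_false] at ha
    subst ha
    have e : γ ∘ (![0, 1] : Fin 2 → ℕ) = ![0, 1] := mem_r h1
    show γ ∘ (![0, 1] : Fin 2 → ℕ) ∈ ({![0, 1], ![0, 1]} : Multiset (Fin 2 → ℕ))
    rw [e]
    simp

lemma vars15 : Q15.vars = {0, 1} := by
  ext x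
  constructor
  · rintro (hx | ⟨a, ha, i, rfl⟩)
    · simp only [Q15, List.mem_cons, List.not_mem_nil, or_false] at hx
      simp [hx]
    · simp only [Q15, List.mem_cons, List.not_mem_nil, or_false] at ha
      subst ha
      fin_cases i <;> simp <;> decide
  · rintro (rfl | rfl)
    · exact Or.inl (by simp [Q15])
    · exact Or.inr ⟨⟨RelRP.r, ![0, 1]⟩, by simp [Q15], (1 : Fin 2), rfl⟩

lemma vars15' : Q15'.vars = {0, 1} := by
  ext x
  constructor
  · rintro (hx | ⟨a, ha, i, rfl⟩)
    · simp only [Q15', List.mem_cons, List.not_mem_nil, or_false] at hx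
      simp [hx]
    · simp only [Q15', List.mem_cons, List.not_mem_nil, or_false] at ha
      rcases ha with rfl | rfl <;> (fin_cases i <;> simp <;> decide)
  · rintro (rfl | rfl)
    · exact Or.inl (by simp [Q15'])
    · exact Or.inr ⟨⟨RelRP.r, ![0, 1]⟩, by simp [Q15'], (1 : Fin 2), rfl⟩

lemma canon_eq (Q : CQ Srp) (hv : Q.vars = {0, 1}) (γ : ℕ → ℕ)
    (hc : Canon Q γ) (h0 : γ 0 = 0) (h1 : γ 1 = 1) : γ = gam0 := by
  funext x
  by_cases hx : x ∈ Q.vars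
  · rw [hv] at hx
    rcases hx with rfl | rfl
    · simpa [gam0] using h0
    · simpa [gam0] using h1
  · have hd := hc x hx
    rw [hv] at hx
    simp only [Set.mem_insert_iff, Set.mem_singleton_iff, not_or] at hx
    simp [gam0, hx.2, hd]

lemma gam0_mem (Q : CQ Srp) (hv : Q.vars = {0, 1}) (hhd : Q.hd = [0]) :
    Canon Q gam0 ∧ Q.hd.map gam0 = [0] := by
  constructor
  · intro x hx
    rw [hv] at hx
    simp only [Set.mem_insert_iff, Set.mem_singleton_iff, not_or] at hx
    simp [gam0, hx.2]
  · simp [hhd, gam0]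

lemma weight_Q15 (γ : ℕ → ℕ) :
    weight D15 Q15 γ = (if (γ ∘ (![0,1] : Fin 2 → ℕ)) = ![0,1] then 1 else 0) := by
  simp only [weight, Q15, List.map_cons, List.map_nil, List.prod_cons, List.prod_nil, mul_one,
    D15]
  erw [count_single_any]
  by_cases h : (γ ∘ (![0,1] : Fin 2 → ℕ)) = ![0,1] <;> simp [h] <;> exact h

lemma weight_Q15' (γ : ℕ → ℕ) :
    weight D15 Q15' γ = (if (γ ∘ (![0,1] : Fin 2 → ℕ)) = ![0,1] then 2 else 0) := by
  simp only [weight, Q15', List.map_cons, List.map_nil, List.prod_cons, List.prod_nil, mul_one,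
    D15]
  erw [count_single_any, count_pair_any]
  split <;> simp
  · exact (if_pos ‹_›).trans (if_pos ‹_›).symm
  · exact ‹_›

lemma bagMult_eq (Q : CQ Srp) (hv : Q.vars = {0, 1}) (hhd : Q.hd = [0])
    (hw : ∀ γ : ℕ → ℕ, γ 1 ≠ 1 → weight D15 Q γ = 0) :
    bagMult D15 Q [0] = weight D15 Q gam0 := by
  classical
  unfold bagMult
  rw [finsum_mem_def, finsum_eq_single _ gam0]
  · rw [Set.indicator_of_mem]
    exact ⟨(gam0_mem Q hv hhd).1, (gam0_mem Q hv hhd).2⟩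
  · intro γ hγ
    rw [Set.indicator_apply]
    split
    · rename_i hmem
      obtain ⟨hc, hm⟩ := hmem
      rw [hhd] at hm
      simp only [List.map_cons, List.map_nil, List.cons.injEq, and_true] at hm
      by_cases h1 : γ 1 = 1
      · exact absurd (canon_eq Q hv γ hc hm h1) hγ
      · exact hw γ h1
    · rfl

lemma gam0_tup : (gam0 ∘ (![0,1] : Fin 2 → ℕ)) = ![0,1] := by
  funext i; fin_cases i <;> simp [gam0]

lemma bag15 : bagMult D15 Q15 [0] = 1 := by
  rw [bagMult_eq Q15 vars15 rfl, weight_Q15, if_pos gam0_tup]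
  intro γ h1
  rw [weight_Q15]
  rw [if_neg]
  intro h
  exact h1 (tup_eq γ h).2

lemma bag15' : bagMult D15 Q15' [0] = 2 := by
  rw [bagMult_eq Q15' vars15' rfl, weight_Q15', if_pos gam0_tup]
  intro γ h1
  rw [weight_Q15']
  rw [if_neg]
  intro h
  exact h1 (tup_eq γ h).2

/-- if relation P may be a bag, the chase step applying σ2 to Q is unsound
under bag semantics: D15 satisfies Σ = {σ1, σ2} and gives Q(D,B) = {(a)} but
Q'(D,B) = {(a),(a)}. -/
theorem chase_step_on_bag_relation_unsound_bag :
    DBSat D15 Sigma15 ∧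
    bagMult D15 Q15 [0] = 1 ∧
    bagMult D15 Q15' [0] = 2 ∧
    ¬ (∀ D : DB Srp ℕ, DBSat D Sigma15 →
        ∀ t : List ℕ, bagMult D Q15 t = bagMult D Q15' t) := by
  refine ⟨dbsat15, bag15, bag15', fun h => ?_⟩
  have := h D15 dbsat15 [0]
  rw [bag15, bag15'] at this
  exact absurd this (by norm_num)
end
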